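/- Let m ≥ 1 be an integer and μ ∈ ℝ. Then the rational function w_{m,0}(z; μ) = L_m^{(μ+1)}(z) / L_{m−1}^{(μ+1)}(z) is a solution of P_V with parameters α = m²/2, β = −(m+1+μ)²/2, γ = μ. -/

import Mathlib

noncomputable section

open Finset

/-- Generalized binomial coefficient `C(x, k)` for real `x`. -/
def genBinom (x : ℝ) (k : ℕ) : ℝ :=
  (∏ i ∈ Finset.range k, (x - i)) / (Nat.factorial k)

/-- Associated Laguerre polynomial `L_n^{(α)}(z)`, with the convention `L_n^{(α)} = 0` for `n < 0`. -/
def lagL (n : ℤ) (α : ℝ) : ℝ → ℝ := fun z =>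
  if n < 0 then 0
  else ∑ k ∈ Finset.range (n.toNat + 1),
    (-1 : ℝ) ^ k * genBinom ((n : ℝ) + α) (n.toNat - k) * z ^ k / (Nat.factorial k)

/-- Generalised Laguerre polynomial
`T_{m,n}^{(μ)}(z) = det[(d/dz)^{j+k} L_{m+n}^{(μ+1)}(z)]_{j,k=0}^{n-1}`
(with `T_{m,0}^{(μ)} = 1`, the empty determinant). -/
def genLag (m : ℤ) (n : ℕ) (μ : ℝ) : ℝ → ℝ := fun z =>
  Matrix.det (Matrix.of fun j k : Fin n =>
    iteratedDeriv ((j : ℕ) + (k : ℕ)) (lagL (m + n) (μ + 1)) z)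

/-- Wronskian `Wr(f_1, …, f_r)(z) = det[(d/dz)^{j-1} f_k(z)]`. -/
def wronskian {r : ℕ} (f : Fin r → ℝ → ℝ) : ℝ → ℝ := fun z =>
  Matrix.det (Matrix.of fun j k : Fin r => iteratedDeriv (j : ℕ) (f k) z)

/-- The constant `c_{m,n} = (-1)^{n(2m+1+n)/2} ∏_{j=1}^n (j-1)!/(m+j)!`. -/
def cmn (m n : ℕ) : ℝ :=
  (-1 : ℝ) ^ (n * (2 * m + 1 + n) / 2) *
    ∏ j ∈ Finset.range n, (Nat.factorial j : ℝ) / (Nat.factorial (m + j + 1))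

/-- `τ_{m,n}^{(μ)}(z) = det[(z d/dz)^{j+k} L_{m+n}^{(n+μ)}(z)]_{j,k=0}^{n-1}`. -/
def tauP (m : ℤ) (n : ℕ) (μ : ℝ) : ℝ → ℝ := fun z =>
  Matrix.det (Matrix.of fun j k : Fin n =>
    ((fun (g : ℝ → ℝ) => fun t => t * deriv g t)^[(j : ℕ) + (k : ℕ)]
      (lagL (m + n) ((n : ℝ) + μ))) z)

/-- Hirota bilinear operator `D_z(f • g) = f' g - f g'`. -/
def hirota (f g : ℝ → ℝ) (z : ℝ) : ℝ := deriv f z * g z - f z * deriv g z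

/-- Probabilists' Hermite polynomial `He_n` as a real function. -/
def He (n : ℕ) : ℝ → ℝ := fun z => Polynomial.aeval z (Polynomial.hermite n)

/-- The fifth Painlevé equation (with `δ = -1/2`) for `w` with parameters `(a, b, c)`,
holding at the point `z`. -/
def PV (a b c : ℝ) (w : ℝ → ℝ) (z : ℝ) : Prop :=
  iteratedDeriv 2 w z =
    (1 / (2 * w z) + 1 / (w z - 1)) * (deriv w z) ^ 2
      - (1 / z) * deriv w z
      + (w z - 1) ^ 2 * (a * (w z) ^ 2 + b) / (z ^ 2 * w z)
      + c * w z / z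
      - w z * (w z + 1) / (2 * (w z - 1))

/-- The Jimbo–Miwa–Okamoto `σ`-equation `S_V` with parameters `(ν₁, ν₂, ν₃)`,
holding at the point `z`. -/
def SV (ν₁ ν₂ ν₃ : ℝ) (σ : ℝ → ℝ) (z : ℝ) : Prop :=
  (z * iteratedDeriv 2 σ z) ^ 2 =
    (2 * (deriv σ z) ^ 2 + (ν₁ + ν₂ + ν₃ - z) * deriv σ z + σ z) ^ 2
      - 4 * deriv σ z * (deriv σ z + ν₁) * (deriv σ z + ν₂) * (deriv σ z + ν₃)


/-! ### Auxiliary material for STATEMENT 9 -/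

lemma genBinom_succ'' (x : ℝ) (j : ℕ) :
    ((j : ℝ) + 1) * genBinom x (j + 1) = (x - j) * genBinom x j := by
  unfold genBinom
  rw [Finset.prod_range_succ, Nat.factorial_succ]
  have h1 : (Nat.factorial j : ℝ) ≠ 0 := Nat.cast_ne_zero.mpr (Nat.factorial_ne_zero j)
  have h2 : ((j:ℝ) + 1) ≠ 0 := by positivity
  push_cast
  field_simp

lemma genBinom_succ' (x : ℝ) (j : ℕ) :
    ((j : ℝ) + 1) * genBinom (x + 1) (j + 1) = (x + 1) * genBinom x j := by
  unfold genBinom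
  rw [Finset.prod_range_succ', Nat.factorial_succ]
  have h1 : (Nat.factorial j : ℝ) ≠ 0 := Nat.cast_ne_zero.mpr (Nat.factorial_ne_zero j)
  have h2 : ((j:ℝ) + 1) ≠ 0 := by positivity
  have h4 : (∏ i ∈ Finset.range j, (x + 1 - ((i+1 : ℕ):ℝ))) = ∏ i ∈ Finset.range j, (x - i) :=
    Finset.prod_congr rfl fun i _ => by push_cast; ring
  rw [h4]
  push_cast
  field_simp
  ring

lemma genBinom_pascal (x : ℝ) (j : ℕ) :
    genBinom (x + 1) (j + 1) = genBinom x (j + 1) + genBinom x j := by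
  have h2 : ((j:ℝ) + 1) ≠ 0 := by positivity
  apply mul_left_cancel₀ h2
  rw [genBinom_succ', mul_add, genBinom_succ'']
  ring

/-- The Laguerre polynomial as a function of a natural-number index. -/
def fL (n : ℕ) (α : ℝ) : ℝ → ℝ := fun z =>
  ∑ k ∈ Finset.range (n + 1),
    (-1 : ℝ) ^ k * genBinom ((n : ℝ) + α) (n - k) * z ^ k / (Nat.factorial k)

lemma fL_hasDerivAt (n : ℕ) (α : ℝ) (z : ℝ) :
    HasDerivAt (fL n α) (∑ k ∈ Finset.range (n + 1),
      (-1 : ℝ) ^ k * genBinom ((n : ℝ) + α) (n - k) * ((k : ℝ) * z ^ (k - 1)) / (Nat.factorial k)) z := by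
  have he : fL n α = fun z => ∑ k ∈ Finset.range (n + 1),
      ((-1 : ℝ) ^ k * genBinom ((n : ℝ) + α) (n - k) / (Nat.factorial k)) * z ^ k := by
    funext t; unfold fL; exact Finset.sum_congr rfl fun k _ => by ring
  rw [he]
  have h := HasDerivAt.fun_sum (fun k (_ : k ∈ Finset.range (n+1)) =>
    (hasDerivAt_pow k z).const_mul ((-1 : ℝ) ^ k * genBinom ((n : ℝ) + α) (n - k) / (Nat.factorial k)))
  convert h using 1
  · rfl
  · rfl
  exact Finset.sum_congr rfl fun k _ => by ring

lemma fL_continuous (n : ℕ) (α : ℝ) : Continuous (fL n α) := by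
  unfold fL
  continuity

lemma lemA (n : ℕ) (α : ℝ) (z : ℝ) :
    z * deriv (fL (n + 1) α) z
      = ((n : ℝ) + 1) * fL (n + 1) α z - (((n : ℝ) + 1) + α) * fL n α z := by
  rw [(fL_hasDerivAt (n + 1) α z).deriv]
  have hL : z * ∑ k ∈ Finset.range (n + 2),
      (-1 : ℝ) ^ k * genBinom (((n:ℕ)+1 : ℕ) + α) ((n+1) - k) * ((k : ℝ) * z ^ (k - 1)) / (Nat.factorial k)
      = ∑ k ∈ Finset.range (n + 2),
      (-1 : ℝ) ^ k * genBinom (((n:ℕ)+1 : ℕ) + α) ((n+1) - k) * ((k : ℝ) * z ^ k) / (Nat.factorial k) := by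
    rw [Finset.mul_sum]
    refine Finset.sum_congr rfl fun k _ => ?_
    rcases k with _ | k
    · simp
    · rw [pow_succ]; push_cast; ring
  rw [hL]
  unfold fL
  rw [Finset.sum_range_succ (n := n + 1), Finset.sum_range_succ (n := n + 1), mul_add]
  have htop : (-1:ℝ)^(n+1) * genBinom (((n:ℕ)+1:ℕ) + α) ((n+1)-(n+1)) * (((n+1:ℕ):ℝ) * z^(n+1)) / (Nat.factorial (n+1))
      = ((n:ℝ)+1) * ((-1:ℝ)^(n+1) * genBinom (((n:ℕ)+1:ℕ) + α) ((n+1)-(n+1)) * z^(n+1) / (Nat.factorial (n+1))) := by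
    push_cast; ring
  rw [htop]
  rw [add_sub_right_comm]
  congr 1
  rw [Finset.mul_sum, Finset.mul_sum, ← Finset.sum_sub_distrib]
  refine Finset.sum_congr rfl fun k hk => ?_
  rw [Finset.mem_range] at hk
  have hj : (n + 1) - k = (n - k) + 1 := by omega
  have hcast : ((n - k : ℕ) : ℝ) = (n : ℝ) - k := by
    rw [Nat.cast_sub (by omega)]
  have h := genBinom_succ' ((n : ℝ) + α) (n - k)
  rw [hcast] at h
  have hx : (n : ℝ) + α + 1 = (((n:ℕ)+1:ℕ) : ℝ) + α := by push_cast; ring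
  rw [hx] at h
  rw [hj]
  push_cast
  push_cast at h
  linear_combination (-((-1:ℝ)^k * z^k / (Nat.factorial k))) * h

lemma lemD (n : ℕ) (α : ℝ) (z : ℝ) :
    deriv (fL (n + 1) α) z = deriv (fL n α) z - fL n α z := by
  rw [(fL_hasDerivAt (n + 1) α z).deriv, (fL_hasDerivAt n α z).deriv]
  have e1 : (∑ k ∈ Finset.range (n + 1 + 1),
        (-1 : ℝ) ^ k * genBinom (((n:ℕ)+1 : ℕ) + α) ((n+1) - k) * ((k : ℝ) * z ^ (k - 1)) / (Nat.factorial k))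
      = ∑ k ∈ Finset.range (n + 1),
        (-1 : ℝ) ^ (k+1) * genBinom (((n:ℕ)+1 : ℕ) + α) ((n+1) - (k+1)) * (((k:ℝ)+1) * z ^ k) / (Nat.factorial (k+1)) := by
    rw [Finset.sum_range_succ' _ (n + 1)]
    simp only [Nat.cast_zero, zero_mul, mul_zero, zero_div, add_zero]
    refine Finset.sum_congr rfl fun k _ => ?_
    push_cast
    ring
  have e2 : (∑ k ∈ Finset.range (n + 1),
        (-1 : ℝ) ^ k * genBinom ((n:ℕ) + α) (n - k) * ((k : ℝ) * z ^ (k - 1)) / (Nat.factorial k))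
      = ∑ k ∈ Finset.range n,
        (-1 : ℝ) ^ (k+1) * genBinom ((n:ℕ) + α) (n - (k+1)) * (((k:ℝ)+1) * z ^ k) / (Nat.factorial (k+1)) := by
    rw [Finset.sum_range_succ' _ n]
    simp only [Nat.cast_zero, zero_mul, mul_zero, zero_div, add_zero]
    refine Finset.sum_congr rfl fun k _ => ?_
    push_cast
    ring
  rw [e1, e2, eq_sub_iff_add_eq]
  unfold fL
  rw [← Finset.sum_add_distrib, Finset.sum_range_succ]
  have hfac : ∀ k : ℕ, ((Nat.factorial (k+1) : ℝ)) = ((k:ℝ)+1) * Nat.factorial k := by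
    intro k; rw [Nat.factorial_succ]; push_cast; ring
  have hne : ∀ k : ℕ, ((Nat.factorial k : ℝ)) ≠ 0 := fun k => Nat.cast_ne_zero.mpr (Nat.factorial_ne_zero k)
  have htop : (-1:ℝ)^(n+1) * genBinom (((n:ℕ)+1:ℕ) + α) ((n+1) - (n+1)) * (((n:ℝ)+1) * z ^ n) / (Nat.factorial (n+1))
      + (-1:ℝ)^n * genBinom ((n:ℕ) + α) (n - n) * z ^ n / (Nat.factorial n) = 0 := by
    have h0 : ∀ x : ℝ, genBinom x 0 = 1 := by intro x; simp [genBinom]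
    rw [show (n+1) - (n+1) = 0 from by omega, show n - n = 0 from by omega, h0, h0, hfac n]
    have := hne n
    have h2 : ((n:ℝ)+1) ≠ 0 := by positivity
    field_simp
    ring
  rw [htop, add_zero]
  refine Finset.sum_congr rfl fun k hk => ?_
  rw [Finset.mem_range] at hk
  have h1 : (n+1) - (k+1) = (n - (k+1)) + 1 := by omega
  have h2 : n - k = (n - (k+1)) + 1 := by omega
  have hx : (((n:ℕ)+1 : ℕ) : ℝ) + α = ((n:ℝ) + α) + 1 := by push_cast; ring
  rw [h1, h2, hx, genBinom_pascal ((n:ℝ) + α) (n - (k+1))]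
  rw [hfac k]
  have := hne k
  have h3 : ((k:ℝ)+1) ≠ 0 := by positivity
  field_simp
  ring

lemma riccati (n : ℕ) (α : ℝ) (z : ℝ) (hz : z ≠ 0) (hQ : fL n α z ≠ 0) :
    deriv (fun t => fL (n + 1) α t / fL n α t) z
      = (-((n:ℝ)+1) * (fL (n + 1) α z / fL n α z)^2
          + (2*((n:ℝ)+1)+α-z) * (fL (n + 1) α z / fL n α z) - (((n:ℝ)+1)+α)) / z := by
  have hP : HasDerivAt (fL (n + 1) α) (deriv (fL (n + 1) α) z) z :=
    (fL_hasDerivAt (n + 1) α z).differentiableAt.hasDerivAt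
  have hQd : HasDerivAt (fL n α) (deriv (fL n α) z) z :=
    (fL_hasDerivAt n α z).differentiableAt.hasDerivAt
  rw [(hP.fun_div hQd hQ).deriv]
  have hA := lemA n α z
  have hB : z * deriv (fL n α) z
      = ((n : ℝ) + 1) * fL (n + 1) α z - (((n : ℝ) + 1) + α - z) * fL n α z := by
    have hD := lemD n α z
    linear_combination hA - z * hD
  field_simp
  linear_combination (fL n α z) * hA - (fL (n+1) α z) * hB

lemma lagL_eq_fL (n : ℕ) (α : ℝ) : lagL (n : ℤ) α = fL n α := by
  funext z
  unfold lagL fL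
  rw [if_neg (by exact Int.not_lt.mpr (Int.natCast_nonneg n))]
  norm_num

/-- the `n = 0` rational solution of `P_V`. -/
theorem pv_rational_solution_n_zero (m : ℕ) (hm : 1 ≤ m) (μ : ℝ) (w : ℝ → ℝ)
    (hw : w = fun z => lagL (m : ℤ) (μ + 1) z / lagL ((m : ℤ) - 1) (μ + 1) z) :
    ∀ z : ℝ, z ≠ 0 → lagL ((m : ℤ) - 1) (μ + 1) z ≠ 0 → w z ≠ 0 → w z ≠ 1 →
      PV ((m : ℝ) ^ 2 / 2) (-((m : ℝ) + 1 + μ) ^ 2 / 2) μ w z := by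
  obtain ⟨n, rfl⟩ : ∃ n, m = n + 1 := ⟨m - 1, by omega⟩
  set α := μ + 1 with hα
  have hl1 : lagL ((n + 1 : ℕ) : ℤ) α = fL (n + 1) α := lagL_eq_fL (n + 1) α
  have hl2 : lagL (((n + 1 : ℕ) : ℤ) - 1) α = fL n α := by
    rw [show ((n + 1 : ℕ) : ℤ) - 1 = ((n : ℕ) : ℤ) from by push_cast; ring]
    exact lagL_eq_fL n α
  rw [hl1, hl2] at hw
  subst hw
  intro z hz hQ hw0 hw1
  rw [hl2] at hQ
  set P : ℝ → ℝ := fL (n + 1) α with hP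
  set Q : ℝ → ℝ := fL n α with hQdef
  set w : ℝ → ℝ := fun t => P t / Q t with hwdef
  set b : ℝ := 2 * ((n:ℝ)+1) + α with hb
  set c : ℝ := ((n:ℝ)+1) + α with hcc
  set g : ℝ → ℝ := fun t => (-((n:ℝ)+1) * (w t)^2 + (b - t) * (w t) - c) / t with hg
  have hUopen : IsOpen {t : ℝ | t ≠ 0 ∧ Q t ≠ 0} := by
    have h1 : IsOpen {t : ℝ | t ≠ 0} := isOpen_ne
    have h2 : IsOpen {t : ℝ | Q t ≠ 0} :=
      isOpen_compl_singleton.preimage (fL_continuous n α)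
    exact h1.inter h2
  have hmem : z ∈ {t : ℝ | t ≠ 0 ∧ Q t ≠ 0} := ⟨hz, hQ⟩
  have hev : deriv w =ᶠ[nhds z] g := by
    filter_upwards [hUopen.mem_nhds hmem] with t ht
    exact riccati n α t ht.1 ht.2
  have hdw : HasDerivAt w (deriv w z) z := by
    have hPd : HasDerivAt P (deriv P z) z :=
      (fL_hasDerivAt (n + 1) α z).differentiableAt.hasDerivAt
    have hQd : HasDerivAt Q (deriv Q z) z :=
      (fL_hasDerivAt n α z).differentiableAt.hasDerivAt
    exact ((hPd.fun_div hQd hQ).differentiableAt).hasDerivAt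
  have hnum : HasDerivAt (fun t => -((n:ℝ)+1) * (w t)^2 + (b - t) * (w t) - c)
      (-((n:ℝ)+1) * (2 * w z ^ 1 * deriv w z) + ((-1) * w z + (b - z) * deriv w z)) z := by
    have h1 : HasDerivAt (fun t => -((n:ℝ)+1) * (w t)^2)
        (-((n:ℝ)+1) * (2 * w z ^ 1 * deriv w z)) z := by
      have := (hdw.pow 2).const_mul (-((n:ℝ)+1))
      simpa using this
    have h2 : HasDerivAt (fun t => (b - t) * (w t)) ((-1) * w z + (b - z) * deriv w z) z := by
      have hbt : HasDerivAt (fun t : ℝ => b - t) (-1) z := by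
        simpa using (hasDerivAt_id z).const_sub b
      exact hbt.mul hdw
    exact (h1.add h2).sub_const c
  have hgd : HasDerivAt g
      (((-((n:ℝ)+1) * (2 * w z ^ 1 * deriv w z) + ((-1) * w z + (b - z) * deriv w z)) * z
        - (-((n:ℝ)+1) * (w z)^2 + (b - z) * (w z) - c) * 1) / z ^ 2) z := by
    exact hnum.div (hasDerivAt_id z) hz
  have h2d : iteratedDeriv 2 w z
      = ((-((n:ℝ)+1) * (2 * w z ^ 1 * deriv w z) + ((-1) * w z + (b - z) * deriv w z)) * z
        - (-((n:ℝ)+1) * (w z)^2 + (b - z) * (w z) - c) * 1) / z ^ 2 := by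
    rw [show (2 : ℕ) = 1 + 1 from rfl, iteratedDeriv_succ, iteratedDeriv_one]
    rw [hev.deriv_eq]
    exact hgd.deriv
  have hR : deriv w z = (-((n:ℝ)+1) * (w z)^2 + (b - z) * (w z) - c) / z :=
    riccati n α z hz hQ
  unfold PV
  rw [h2d, hR]
  have hw1' : w z - 1 ≠ 0 := sub_ne_zero.mpr hw1
  simp only [hb, hcc, hα]
  push_cast
  field_simp
  ring
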